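/- The optimal value of the augmented minimum-cost flow problem equals |S| − 2·(minimum of the nLasso objective h). Precisely: the minimum, over all pairs (y, u) where y : E → ℝ satisfies |y_e| ≤ λ W_e for every e ∈ E and u : V → ℝ satisfies the conservation constraint u_i = div_i(y) for every i ∈ V, of Σ_{i∈S} (u_i − 1)² + (1/α) Σ_{i∉S} u_i², equals |S| − 2 · min_{x:V→ℝ} h(x). -/
import Mathlib


open Finset

/-- Total variation of a graph signal `x` w.r.t. oriented edge set `E` and weights `W`. -/
noncomputable def TV {n : ℕ} (E : Finset (Fin n × Fin n)) (W : Fin n × Fin n → ℝ)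
    (x : Fin n → ℝ) : ℝ :=
  ∑ e ∈ E, W e * |x e.1 - x e.2|

/-- The network Lasso objective. -/
noncomputable def nLasso {n : ℕ} (E : Finset (Fin n × Fin n)) (W : Fin n × Fin n → ℝ)
    (S : Finset (Fin n)) (α lam : ℝ) (x : Fin n → ℝ) : ℝ :=
  ∑ i ∈ S, (x i - 1) ^ 2 / 2 + ∑ i ∈ Sᶜ, α * x i ^ 2 / 2 + lam * TV E W x

/-- Divergence of the flow `y` at node `i`: outgoing minus incoming flow. -/
noncomputable def divg {n : ℕ} (E : Finset (Fin n × Fin n)) (y : Fin n × Fin n → ℝ)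
    (i : Fin n) : ℝ :=
  ∑ e ∈ E.filter (fun e => e.1 = i), y e - ∑ e ∈ E.filter (fun e => e.2 = i), y e

/-- The dual (flow) objective of the network Lasso. -/
noncomputable def dualObj {n : ℕ} (E : Finset (Fin n × Fin n)) (S : Finset (Fin n))
    (α : ℝ) (y : Fin n × Fin n → ℝ) : ℝ :=
  -∑ i ∈ S, (divg E y i ^ 2 / 2 - divg E y i) - ∑ i ∈ Sᶜ, divg E y i ^ 2 / (2 * α)

/-- The boundary of a node set `C`: edges with exactly one endpoint in `C`. -/
def bdry {n : ℕ} (E : Finset (Fin n × Fin n)) (C : Finset (Fin n)) :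
    Finset (Fin n × Fin n) :=
  E.filter (fun e => (e.1 ∈ C ∧ e.2 ∉ C) ∨ (e.1 ∉ C ∧ e.2 ∈ C))

lemma divg_inner {n : ℕ} (E : Finset (Fin n × Fin n)) (y : Fin n × Fin n → ℝ)
    (x : Fin n → ℝ) :
    ∑ i, divg E y i * x i = ∑ e ∈ E, y e * (x e.1 - x e.2) := by
  have h1 : ∑ i, (∑ e ∈ E.filter (fun e => e.1 = i), y e) * x i
      = ∑ e ∈ E, y e * x e.1 := by
    rw [← Finset.sum_fiberwise E (fun e => e.1) (fun e => y e * x e.1)]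
    refine Finset.sum_congr rfl fun i _ => ?_
    rw [Finset.sum_mul]
    exact Finset.sum_congr rfl fun e he => by rw [(Finset.mem_filter.mp he).2]
  have h2 : ∑ i, (∑ e ∈ E.filter (fun e => e.2 = i), y e) * x i
      = ∑ e ∈ E, y e * x e.2 := by
    rw [← Finset.sum_fiberwise E (fun e => e.2) (fun e => y e * x e.2)]
    refine Finset.sum_congr rfl fun i _ => ?_
    rw [Finset.sum_mul]
    exact Finset.sum_congr rfl fun e he => by rw [(Finset.mem_filter.mp he).2]
  simp only [divg, sub_mul]
  rw [Finset.sum_sub_distrib, h1, h2, ← Finset.sum_sub_distrib]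
  exact Finset.sum_congr rfl fun e _ => by ring

lemma master {n : ℕ} (E : Finset (Fin n × Fin n)) (W : Fin n × Fin n → ℝ)
    (S : Finset (Fin n)) (α lam : ℝ) (hα : α ≠ 0)
    (y : Fin n × Fin n → ℝ) (u : Fin n → ℝ) (x : Fin n → ℝ)
    (hu : ∀ i, u i = divg E y i) :
    ∑ i ∈ S, (u i - 1) ^ 2 + (1 / α) * ∑ i ∈ Sᶜ, u i ^ 2
      = ((S.card : ℝ) - 2 * nLasso E W S α lam x)
        + (∑ i ∈ S, (u i + x i - 1) ^ 2
           + (1 / α) * ∑ i ∈ Sᶜ, (u i + α * x i) ^ 2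
           + 2 * ∑ e ∈ E, (lam * W e * |x e.1 - x e.2| - y e * (x e.1 - x e.2))) := by
  have h1 : ∑ i ∈ S, (u i + x i - 1) ^ 2
      = ∑ i ∈ S, (u i - 1) ^ 2 + (∑ i ∈ S, (x i - 1) ^ 2
        + (2 * ∑ i ∈ S, u i * x i - S.card)) := by
    have key : ∑ i ∈ S, (u i - 1) ^ 2 + (∑ i ∈ S, (x i - 1) ^ 2
        + (2 * ∑ i ∈ S, u i * x i - (S.card : ℝ)))
        = ∑ i ∈ S, ((u i - 1) ^ 2 + ((x i - 1) ^ 2 + (2 * (u i * x i) - 1))) := by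
      rw [Finset.mul_sum, Finset.card_eq_sum_ones S]
      push_cast
      rw [← Finset.sum_sub_distrib, ← Finset.sum_add_distrib, ← Finset.sum_add_distrib]
    rw [key]
    exact Finset.sum_congr rfl fun i _ => by ring
  have h2 : ∑ i ∈ Sᶜ, (u i + α * x i) ^ 2
      = ∑ i ∈ Sᶜ, u i ^ 2 + (α ^ 2 * ∑ i ∈ Sᶜ, x i ^ 2
        + 2 * α * ∑ i ∈ Sᶜ, u i * x i) := by
    rw [Finset.mul_sum, Finset.mul_sum, ← Finset.sum_add_distrib, ← Finset.sum_add_distrib]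
    exact Finset.sum_congr rfl fun i _ => by ring
  have h3 : ∑ e ∈ E, (lam * W e * |x e.1 - x e.2| - y e * (x e.1 - x e.2))
      = lam * ∑ e ∈ E, W e * |x e.1 - x e.2| - ∑ e ∈ E, y e * (x e.1 - x e.2) := by
    rw [Finset.mul_sum, ← Finset.sum_sub_distrib]
    exact Finset.sum_congr rfl fun e _ => by ring
  have hA : ∑ i ∈ S, u i * x i + ∑ i ∈ Sᶜ, u i * x i
      = ∑ e ∈ E, y e * (x e.1 - x e.2) := by
    rw [Finset.sum_add_sum_compl, ← divg_inner E y x]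
    exact Finset.sum_congr rfl fun i _ => by rw [hu]
  have hn1 : ∑ i ∈ S, (x i - 1) ^ 2 / 2 = (∑ i ∈ S, (x i - 1) ^ 2) / 2 := by
    rw [Finset.sum_div]
  have hn2 : ∑ i ∈ Sᶜ, α * x i ^ 2 / 2 = α * (∑ i ∈ Sᶜ, x i ^ 2) / 2 := by
    rw [Finset.mul_sum, Finset.sum_div]
  rw [h1, h2, h3, nLasso, hn1, hn2, TV]
  field_simp
  linear_combination (-(2 * α)) * hA

noncomputable def Gobj {n : ℕ} (E : Finset (Fin n × Fin n)) (S : Finset (Fin n))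
    (α : ℝ) (y : Fin n × Fin n → ℝ) : ℝ :=
  ∑ i ∈ S, (divg E y i - 1) ^ 2 + (1 / α) * ∑ i ∈ Sᶜ, (divg E y i) ^ 2

noncomputable def xh {n : ℕ} (E : Finset (Fin n × Fin n)) (S : Finset (Fin n))
    (α : ℝ) (y : Fin n × Fin n → ℝ) : Fin n → ℝ :=
  fun i => if i ∈ S then 1 - divg E y i else -(divg E y i) / α

lemma divg_congr {n : ℕ} (E : Finset (Fin n × Fin n)) {y y' : Fin n × Fin n → ℝ}
    (h : ∀ e ∈ E, y e = y' e) (i : Fin n) : divg E y i = divg E y' i := by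
  unfold divg
  rw [Finset.sum_congr rfl fun e he => h e (Finset.mem_filter.mp he).1,
    Finset.sum_congr rfl fun e he => h e (Finset.mem_filter.mp he).1]

lemma divg_update {n : ℕ} (E : Finset (Fin n × Fin n)) (y : Fin n × Fin n → ℝ)
    {e : Fin n × Fin n} (he : e ∈ E) (t : ℝ) (i : Fin n) :
    divg E (Function.update y e (y e + t)) i
      = divg E y i + ((if e.1 = i then t else 0) - (if e.2 = i then t else 0)) := by
  unfold divg
  have key : ∀ s : Finset (Fin n × Fin n), s ⊆ E →
      ∑ e' ∈ s, Function.update y e (y e + t) e'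
        = ∑ e' ∈ s, y e' + (if e ∈ s then t else 0) := by
    intro s _
    have : ∀ e' ∈ s, Function.update y e (y e + t) e'
        = y e' + (if e = e' then t else 0) := by
      intro e' _
      rw [Function.update_apply]
      split_ifs with h1 h2 h3
      · subst h1; ring
      · exact absurd h1.symm h2
      · exact absurd h3.symm h1
      · ring
    rw [Finset.sum_congr rfl this, Finset.sum_add_distrib, Finset.sum_ite_eq]
  rw [key _ (Finset.filter_subset _ _), key _ (Finset.filter_subset _ _)]
  have m1 : (e ∈ E.filter (fun e' => e'.1 = i)) ↔ (e.1 = i) := by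
    simp [Finset.mem_filter, he]
  have m2 : (e ∈ E.filter (fun e' => e'.2 = i)) ↔ (e.2 = i) := by
    simp [Finset.mem_filter, he]
  rw [if_congr m1 rfl rfl, if_congr m2 rfl rfl]
  ring

lemma Gobj_update {n : ℕ} (E : Finset (Fin n × Fin n)) (S : Finset (Fin n)) (α : ℝ)
    (y : Fin n × Fin n → ℝ) {e : Fin n × Fin n} (he : e ∈ E) (hne : e.1 ≠ e.2) (t : ℝ) :
    Gobj E S α (Function.update y e (y e + t))
      = Gobj E S α y
        - 2 * t * (xh E S α y e.1 - xh E S α y e.2)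
        + (if e.1 ∈ S then 1 else 1 / α) * t ^ 2
        + (if e.2 ∈ S then 1 else 1 / α) * t ^ 2 := by
  set y' := Function.update y e (y e + t) with hy'
  have hterm1 : ∀ i, (divg E y' i - 1) ^ 2
      = (divg E y i - 1) ^ 2
        + ((if e.1 = i then 2 * t * (divg E y i - 1) + t ^ 2 else 0)
          + (if e.2 = i then -(2 * t * (divg E y i - 1)) + t ^ 2 else 0)) := by
    intro i
    rw [divg_update E y he t i]
    by_cases h1 : e.1 = i <;> by_cases h2 : e.2 = i
    · exact absurd (h1.trans h2.symm) hne
    · simp only [h1, h2, if_true, if_false]; ring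
    · simp only [h1, h2, if_true, if_false]; ring
    · simp only [h1, h2, if_false]; ring
  have hterm2 : ∀ i, (divg E y' i) ^ 2
      = (divg E y i) ^ 2
        + ((if e.1 = i then 2 * t * divg E y i + t ^ 2 else 0)
          + (if e.2 = i then -(2 * t * divg E y i) + t ^ 2 else 0)) := by
    intro i
    rw [divg_update E y he t i]
    by_cases h1 : e.1 = i <;> by_cases h2 : e.2 = i
    · exact absurd (h1.trans h2.symm) hne
    · simp only [h1, h2, if_true, if_false]; ring
    · simp only [h1, h2, if_true, if_false]; ring
    · simp only [h1, h2, if_false]; ring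
  unfold Gobj
  rw [Finset.sum_congr rfl fun i _ => hterm1 i,
    Finset.sum_congr rfl fun i _ => hterm2 i,
    Finset.sum_add_distrib, Finset.sum_add_distrib,
    Finset.sum_add_distrib, Finset.sum_add_distrib,
    Finset.sum_ite_eq, Finset.sum_ite_eq, Finset.sum_ite_eq, Finset.sum_ite_eq]
  have hc1 : (i : Fin n) → (i ∈ Sᶜ ↔ i ∉ S) := fun i => Finset.mem_compl
  by_cases hs1 : e.1 ∈ S <;> by_cases hs2 : e.2 ∈ S <;>
    simp only [hs1, hs2, (hc1 e.1), (hc1 e.2), if_true, if_false, not_true, not_false_iff,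
      xh] <;> ring

lemma corr_nonneg {n : ℕ} (E : Finset (Fin n × Fin n)) (W : Fin n × Fin n → ℝ)
    (S : Finset (Fin n)) {α lam : ℝ} (hα : 0 < α)
    {y : Fin n × Fin n → ℝ} (hfe : ∀ e ∈ E, |y e| ≤ lam * W e) (u x : Fin n → ℝ) :
    0 ≤ ∑ i ∈ S, (u i + x i - 1) ^ 2 + (1 / α) * ∑ i ∈ Sᶜ, (u i + α * x i) ^ 2
      + 2 * ∑ e ∈ E, (lam * W e * |x e.1 - x e.2| - y e * (x e.1 - x e.2)) := by
  have t1 : (0:ℝ) ≤ ∑ i ∈ S, (u i + x i - 1) ^ 2 :=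
    Finset.sum_nonneg fun i _ => sq_nonneg _
  have t2 : (0:ℝ) ≤ (1 / α) * ∑ i ∈ Sᶜ, (u i + α * x i) ^ 2 :=
    mul_nonneg (by positivity) (Finset.sum_nonneg fun i _ => sq_nonneg _)
  have t3 : (0:ℝ) ≤ ∑ e ∈ E, (lam * W e * |x e.1 - x e.2| - y e * (x e.1 - x e.2)) := by
    refine Finset.sum_nonneg fun e he => ?_
    have h := hfe e he
    have hle : y e * (x e.1 - x e.2) ≤ lam * W e * |x e.1 - x e.2| :=
      calc y e * (x e.1 - x e.2) ≤ |y e * (x e.1 - x e.2)| := le_abs_self _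
        _ = |y e| * |x e.1 - x e.2| := abs_mul _ _
        _ ≤ lam * W e * |x e.1 - x e.2| := mul_le_mul_of_nonneg_right h (abs_nonneg _)
    linarith
  linarith

lemma endpoint_neg {C L v d : ℝ} (hC : 0 < C) (hd : d < 0) (h1 : -L ≤ v) (h2 : v ≤ L)
    (key : ∀ t : ℝ, -L ≤ v + t → v + t ≤ L → 0 ≤ -(2 * t * d) + C * t ^ 2) :
    v = -L := by
  by_contra hne2
  have hgt : -L < v := lt_of_le_of_ne h1 (Ne.symm hne2)
  obtain ⟨m, hm1, hm2, hmpos⟩ : ∃ m : ℝ, m ≤ L + v ∧ m ≤ -d / C ∧ 0 < m :=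
    ⟨min (L + v) (-d / C), min_le_left _ _, min_le_right _ _,
      lt_min (by linarith) (div_pos (by linarith) hC)⟩
  have hk := key (-m) (by linarith) (by linarith)
  have hdm : d ≤ C * (-m) := by
    have := (le_div_iff₀ hC).mp hm2
    nlinarith
  nlinarith [hk, mul_pos_of_neg_of_neg (show -m < 0 by linarith) hd,
    mul_nonpos_of_nonneg_of_nonpos (show 0 ≤ C * (-m) - d by linarith)
      (show -m ≤ 0 by linarith)]

lemma endpoint_pos {C L v d : ℝ} (hC : 0 < C) (hd : 0 < d) (h1 : -L ≤ v) (h2 : v ≤ L)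
    (key : ∀ t : ℝ, -L ≤ v + t → v + t ≤ L → 0 ≤ -(2 * t * d) + C * t ^ 2) :
    v = L := by
  by_contra hne2
  have hlt : v < L := lt_of_le_of_ne h2 hne2
  obtain ⟨m, hm1, hm2, hmpos⟩ : ∃ m : ℝ, m ≤ L - v ∧ m ≤ d / C ∧ 0 < m :=
    ⟨min (L - v) (d / C), min_le_left _ _, min_le_right _ _,
      lt_min (by linarith) (div_pos hd hC)⟩
  have hk := key m (by linarith) (by linarith)
  have hdm : C * m ≤ d := by
    have h9 := (le_div_iff₀ hC).mp hm2
    nlinarith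
  nlinarith [hk, mul_pos hmpos hd,
    mul_nonneg (show 0 ≤ d - C * m by linarith) hmpos.le]

lemma kkt {n : ℕ} {E : Finset (Fin n × Fin n)} (hE : ∀ e ∈ E, e.1 < e.2)
    {W : Fin n × Fin n → ℝ} {S : Finset (Fin n)} {α lam : ℝ} (hα : 0 < α)
    {yh : Fin n × Fin n → ℝ} (hfeas : ∀ e ∈ E, |yh e| ≤ lam * W e)
    (hmin : ∀ y', (∀ e ∈ E, |y' e| ≤ lam * W e) → Gobj E S α yh ≤ Gobj E S α y') :
    ∀ e ∈ E, yh e * (xh E S α yh e.1 - xh E S α yh e.2)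
      = lam * W e * |xh E S α yh e.1 - xh E S α yh e.2| := by
  intro e he
  have hne : e.1 ≠ e.2 := ne_of_lt (hE e he)
  have hc1p : (0:ℝ) < (if e.1 ∈ S then 1 else 1 / α) := by split_ifs <;> positivity
  have hc2p : (0:ℝ) < (if e.2 ∈ S then 1 else 1 / α) := by split_ifs <;> positivity
  have hub := abs_le.mp (hfeas e he)
  have key : ∀ t : ℝ, -(lam * W e) ≤ yh e + t → yh e + t ≤ lam * W e →
      0 ≤ -(2 * t * (xh E S α yh e.1 - xh E S α yh e.2))
        + ((if e.1 ∈ S then 1 else 1 / α) + (if e.2 ∈ S then 1 else 1 / α)) * t ^ 2 := by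
    intro t ht1 ht2
    have feas' : ∀ e' ∈ E, |Function.update yh e (yh e + t) e'| ≤ lam * W e' := by
      intro e' he'
      rw [Function.update_apply]
      split_ifs with h
      · rw [h]; exact abs_le.mpr ⟨ht1, ht2⟩
      · exact hfeas e' he'
    have h2 := hmin _ feas'
    rw [Gobj_update E S α yh he hne t] at h2
    linarith
  rcases lt_trichotomy (xh E S α yh e.1 - xh E S α yh e.2) 0 with hdlt | hdeq | hdgt
  · have hyval : yh e = -(lam * W e) :=
      endpoint_neg (by linarith) hdlt hub.1 hub.2 key
    rw [hyval, abs_of_neg hdlt]; ring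
  · rw [hdeq, abs_zero]; ring
  · have hyval : yh e = lam * W e :=
      endpoint_pos (by linarith) hdgt hub.1 hub.2 key
    rw [hyval, abs_of_pos hdgt]

/-- The optimal value of the augmented minimum-cost flow problem equals
`|S| - 2 · (minimum of the nLasso objective h)`. -/
theorem augmented_min_cost_flow_value
    (n : ℕ) (E : Finset (Fin n × Fin n)) (hE : ∀ e ∈ E, e.1 < e.2)
    (W : Fin n × Fin n → ℝ) (hW : ∀ e ∈ E, 0 < W e)
    (S : Finset (Fin n)) (hS : S.Nonempty)
    (α lam : ℝ) (hα : 0 < α) (hlam : 0 < lam) :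
    ∃ xhat : Fin n → ℝ,
      (∀ z : Fin n → ℝ, nLasso E W S α lam xhat ≤ nLasso E W S α lam z) ∧
      IsLeast
        {t : ℝ | ∃ y : Fin n × Fin n → ℝ, ∃ u : Fin n → ℝ,
          (∀ e ∈ E, |y e| ≤ lam * W e) ∧
          (∀ i : Fin n, u i = divg E y i) ∧
          t = ∑ i ∈ S, (u i - 1) ^ 2 + (1 / α) * ∑ i ∈ Sᶜ, u i ^ 2}
        ((S.card : ℝ) - 2 * nLasso E W S α lam xhat) := by
  classical
  have hαne : α ≠ 0 := ne_of_gt hα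
  -- the compact feasible box
  have hb : ∀ e : Fin n × Fin n, 0 ≤ (if e ∈ E then lam * W e else 0) := by
    intro e; split_ifs with h
    · exact (mul_pos hlam (hW e h)).le
    · exact le_refl 0
  set K : Set (Fin n × Fin n → ℝ) :=
    Set.pi Set.univ (fun e => Set.Icc (-(if e ∈ E then lam * W e else 0))
      (if e ∈ E then lam * W e else 0)) with hKdef
  have hKc : IsCompact K := isCompact_univ_pi fun e => isCompact_Icc
  have hKne : K.Nonempty := by
    refine ⟨fun _ => 0, fun e _ => ?_⟩
    exact Set.mem_Icc.mpr ⟨neg_nonpos.mpr (hb e), hb e⟩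
  have hdivc : ∀ i : Fin n, Continuous fun y : Fin n × Fin n → ℝ => divg E y i := by
    intro i
    exact Continuous.sub (continuous_finset_sum _ fun e _ => continuous_apply e)
      (continuous_finset_sum _ fun e _ => continuous_apply e)
  have hcont : Continuous (Gobj E S α) := by
    unfold Gobj
    exact Continuous.add
      (continuous_finset_sum _ fun i _ => ((hdivc i).sub continuous_const).pow 2)
      (continuous_const.mul (continuous_finset_sum _ fun i _ => (hdivc i).pow 2))
  obtain ⟨yh, hyhK, hminOn⟩ := hKc.exists_isMinOn hKne hcont.continuousOn
  have hfeas : ∀ e ∈ E, |yh e| ≤ lam * W e := by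
    intro e he
    have h1 := hyhK e (Set.mem_univ e)
    simp only [if_pos he] at h1
    exact abs_le.mpr ⟨(Set.mem_Icc.mp h1).1, (Set.mem_Icc.mp h1).2⟩
  have hminAll : ∀ y', (∀ e ∈ E, |y' e| ≤ lam * W e) →
      Gobj E S α yh ≤ Gobj E S α y' := by
    intro y' hy'
    set y'' : Fin n × Fin n → ℝ := fun e => if e ∈ E then y' e else 0 with hy''def
    have hGeq : Gobj E S α y'' = Gobj E S α y' := by
      have hd : ∀ i, divg E y'' i = divg E y' i := by
        intro i
        refine divg_congr E (fun e he => ?_) i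
        rw [hy''def]; exact if_pos he
      unfold Gobj
      simp only [hd]
    have hy''K : y'' ∈ K := by
      intro e _
      rw [hy''def]
      dsimp only
      by_cases he : e ∈ E
      · rw [if_pos he, if_pos he]
        exact Set.mem_Icc.mpr ⟨(abs_le.mp (hy' e he)).1, (abs_le.mp (hy' e he)).2⟩
      · rw [if_neg he, if_neg he]
        exact Set.mem_Icc.mpr ⟨by norm_num, le_refl 0⟩
    calc Gobj E S α yh ≤ Gobj E S α y'' := hminOn hy''K
      _ = Gobj E S α y' := hGeq
  -- the primal candidate
  set xhat : Fin n → ℝ := xh E S α yh with hxhatdef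
  have hkkt := kkt hE hα hfeas hminAll
  -- the corrections vanish at (yh, xhat)
  have hs1 : ∑ i ∈ S, (divg E yh i + xhat i - 1) ^ 2 = 0 := by
    refine Finset.sum_eq_zero fun i hi => ?_
    have : divg E yh i + xhat i - 1 = 0 := by
      rw [hxhatdef]; unfold xh; rw [if_pos hi]; ring
    rw [this]; norm_num
  have hs2 : ∑ i ∈ Sᶜ, (divg E yh i + α * xhat i) ^ 2 = 0 := by
    refine Finset.sum_eq_zero fun i hi => ?_
    have hni : i ∉ S := Finset.mem_compl.mp hi
    have : divg E yh i + α * xhat i = 0 := by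
      rw [hxhatdef]; unfold xh; rw [if_neg hni]; field_simp; ring
    rw [this]; norm_num
  have hs3 : ∑ e ∈ E, (lam * W e * |xhat e.1 - xhat e.2|
      - yh e * (xhat e.1 - xhat e.2)) = 0 := by
    refine Finset.sum_eq_zero fun e he => ?_
    rw [hxhatdef]
    rw [← hkkt e he]; ring
  -- the optimal value identity
  have hval : ∑ i ∈ S, (divg E yh i - 1) ^ 2 + (1 / α) * ∑ i ∈ Sᶜ, (divg E yh i) ^ 2
      = (S.card : ℝ) - 2 * nLasso E W S α lam xhat := by
    rw [master E W S α lam hαne yh (fun i => divg E yh i) xhat (fun i => rfl)]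
    simp only [hs1, hs2, hs3]
    ring
  refine ⟨xhat, ?_, ?_, ?_⟩
  · -- primal optimality
    intro z
    have hm := master E W S α lam hαne yh (fun i => divg E yh i) z (fun i => rfl)
    have hc := corr_nonneg E W S hα hfeas (fun i => divg E yh i) z
    have : (S.card : ℝ) - 2 * nLasso E W S α lam z
        ≤ ∑ i ∈ S, (divg E yh i - 1) ^ 2 + (1 / α) * ∑ i ∈ Sᶜ, (divg E yh i) ^ 2 := by
      rw [hm]; linarith
    rw [hval] at this
    linarith
  · -- membership
    exact ⟨yh, fun i => divg E yh i, hfeas, fun i => rfl, hval.symm⟩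
  · -- lower bound
    rintro t ⟨y, u, hy, hu, rfl⟩
    have hm := master E W S α lam hαne y u xhat hu
    have hc := corr_nonneg E W S hα hy u xhat
    rw [hm]; linarith
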